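/- Let N be the 6×6 rational matrix whose only nonzero entries are N₁₂ = −1, N₁₃ = −1, N₂₄ = −22, N₂₅ = −13, N₃₄ = −13, N₃₅ = −22, N₄₆ = 1, N₅₆ = 1. Then: (i) N_x, N_y and N are nilpotent; (ii) each X ∈ {N_x, N_y, N} satisfies Xᵀ·Q + Q·X = 0 (i.e., lies in the symplectic Lie algebra of Q); (iii) N_x·N_y = N_y·N_x; (iv) N·(N_x + N_y) = (N_x + N_y)·N; and (v) N·N_x ≠ N_x·N. -/

import Mathlib

open Matrix

/-- The symplectic form `Q` of the (1,2,2,1) family (eq. (5.3)). -/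
def Qm : Matrix (Fin 6) (Fin 6) ℚ :=
  !![0, 0, 0, 0, 0, -1;
     0, 0, 0, 0, -1, 0;
     0, 0, 0, -1, 0, 0;
     0, 0, 1, 0, 0, 0;
     0, 1, 0, 0, 0, 0;
     1, 0, 0, 0, 0, 0]

/-- The monodromy logarithm `N_x` (modulo weight-filtration level, eq. (6.6)). -/
def Nx : Matrix (Fin 6) (Fin 6) ℚ :=
  !![0, -1, 0, 0, 0, 0;
     0, 0, 0, -10, -5, 0;
     0, 0, 0, -10, -10, 0;
     0, 0, 0, 0, 0, 0;
     0, 0, 0, 0, 0, 1;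
     0, 0, 0, 0, 0, 0]

/-- The monodromy logarithm `N_y` (modulo weight-filtration level, eq. (6.6)). -/
def Ny : Matrix (Fin 6) (Fin 6) ℚ :=
  !![0, 0, -1, 0, 0, 0;
     0, 0, 0, -10, -10, 0;
     0, 0, 0, -5, -10, 0;
     0, 0, 0, 0, 0, 1;
     0, 0, 0, 0, 0, 0;
     0, 0, 0, 0, 0, 0]

/-- The rational nilpotent element `N` of eq. (8.14). -/
def Nmat : Matrix (Fin 6) (Fin 6) ℚ :=
  !![0, -1, -1, 0, 0, 0;
     0, 0, 0, -22, -13, 0;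
     0, 0, 0, -13, -22, 0;
     0, 0, 0, 0, 0, 1;
     0, 0, 0, 0, 0, 1;
     0, 0, 0, 0, 0, 0]

private lemma zero_vec6 : (![0, 0, 0, 0, 0, 0] : Fin 6 → ℚ) = 0 := by
  funext i; fin_cases i <;> rfl

private def Nx2 : Matrix (Fin 6) (Fin 6) ℚ :=
  !![0, 0, 0, 10, 5, 0;
     0, 0, 0, 0, 0, -5;
     0, 0, 0, 0, 0, -10;
     0, 0, 0, 0, 0, 0;
     0, 0, 0, 0, 0, 0;
     0, 0, 0, 0, 0, 0]

private def Ny2 : Matrix (Fin 6) (Fin 6) ℚ :=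
  !![0, 0, 0, 5, 10, 0;
     0, 0, 0, 0, 0, -10;
     0, 0, 0, 0, 0, -5;
     0, 0, 0, 0, 0, 0;
     0, 0, 0, 0, 0, 0;
     0, 0, 0, 0, 0, 0]

private def Nm2 : Matrix (Fin 6) (Fin 6) ℚ :=
  !![0, 0, 0, 35, 35, 0;
     0, 0, 0, 0, 0, -35;
     0, 0, 0, 0, 0, -35;
     0, 0, 0, 0, 0, 0;
     0, 0, 0, 0, 0, 0;
     0, 0, 0, 0, 0, 0]

private lemma hNx2 : Nx * Nx = Nx2 := by
  simp only [Nx, Nx2]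
  norm_num [Matrix.cons_mul, Matrix.vecMul_cons, Matrix.empty_mul,
    Matrix.cons_vecMul, Matrix.empty_vecMul, zero_vec6]

private lemma hNy2 : Ny * Ny = Ny2 := by
  simp only [Ny, Ny2]
  norm_num [Matrix.cons_mul, Matrix.vecMul_cons, Matrix.empty_mul,
    Matrix.cons_vecMul, Matrix.empty_vecMul, zero_vec6]

private lemma hNm2 : Nmat * Nmat = Nm2 := by
  simp only [Nmat, Nm2]
  norm_num [Matrix.cons_mul, Matrix.vecMul_cons, Matrix.empty_mul,
    Matrix.cons_vecMul, Matrix.empty_vecMul, zero_vec6]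

private lemma hNx4 : Nx2 * Nx2 = 0 := by
  simp only [Nx2]
  norm_num [Matrix.cons_mul, Matrix.vecMul_cons, Matrix.empty_mul,
    Matrix.cons_vecMul, Matrix.empty_vecMul, zero_vec6]
  ext i j; fin_cases i <;> fin_cases j <;> rfl

private lemma hNy4 : Ny2 * Ny2 = 0 := by
  simp only [Ny2]
  norm_num [Matrix.cons_mul, Matrix.vecMul_cons, Matrix.empty_mul,
    Matrix.cons_vecMul, Matrix.empty_vecMul, zero_vec6]
  ext i j; fin_cases i <;> fin_cases j <;> rfl

private lemma hNm4 : Nm2 * Nm2 = 0 := by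
  simp only [Nm2]
  norm_num [Matrix.cons_mul, Matrix.vecMul_cons, Matrix.empty_mul,
    Matrix.cons_vecMul, Matrix.empty_vecMul, zero_vec6]
  ext i j; fin_cases i <;> fin_cases j <;> rfl

private lemma pow4 (A B : Matrix (Fin 6) (Fin 6) ℚ) (h2 : A * A = B) (h4 : B * B = 0) :
    A ^ 4 = 0 := by
  have e1 : A ^ 2 = B := by rw [sq]; exact h2
  rw [show (4 : ℕ) = 2 * 2 from rfl, pow_mul, e1, sq, h4]

private lemma hTx : Nxᵀ =
    !![0, 0, 0, 0, 0, 0;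
       -1, 0, 0, 0, 0, 0;
       0, 0, 0, 0, 0, 0;
       0, -10, -10, 0, 0, 0;
       0, -5, -10, 0, 0, 0;
       0, 0, 0, 0, 1, 0] := by
  ext i j; fin_cases i <;> fin_cases j <;> rfl

private lemma hTy : Nyᵀ =
    !![0, 0, 0, 0, 0, 0;
       0, 0, 0, 0, 0, 0;
       -1, 0, 0, 0, 0, 0;
       0, -10, -5, 0, 0, 0;
       0, -10, -10, 0, 0, 0;
       0, 0, 0, 1, 0, 0] := by
  ext i j; fin_cases i <;> fin_cases j <;> rfl

private lemma hTm : Nmatᵀ =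
    !![0, 0, 0, 0, 0, 0;
       -1, 0, 0, 0, 0, 0;
       -1, 0, 0, 0, 0, 0;
       0, -22, -13, 0, 0, 0;
       0, -13, -22, 0, 0, 0;
       0, 0, 0, 1, 1, 0] := by
  ext i j; fin_cases i <;> fin_cases j <;> rfl

private lemma hsympx : Nxᵀ * Qm + Qm * Nx = 0 := by
  rw [hTx]
  simp only [Nx, Qm]
  norm_num [Matrix.cons_mul, Matrix.vecMul_cons, Matrix.empty_mul,
    Matrix.cons_vecMul, Matrix.empty_vecMul, zero_vec6]
  ext i j; fin_cases i <;> fin_cases j <;> rfl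

private lemma hsympy : Nyᵀ * Qm + Qm * Ny = 0 := by
  rw [hTy]
  simp only [Ny, Qm]
  norm_num [Matrix.cons_mul, Matrix.vecMul_cons, Matrix.empty_mul,
    Matrix.cons_vecMul, Matrix.empty_vecMul, zero_vec6]
  ext i j; fin_cases i <;> fin_cases j <;> rfl

private lemma hsympm : Nmatᵀ * Qm + Qm * Nmat = 0 := by
  rw [hTm]
  simp only [Nmat, Qm]
  norm_num [Matrix.cons_mul, Matrix.vecMul_cons, Matrix.empty_mul,
    Matrix.cons_vecMul, Matrix.empty_vecMul, zero_vec6]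
  ext i j; fin_cases i <;> fin_cases j <;> rfl

private lemma hcommxy : Nx * Ny = Ny * Nx := by
  simp only [Nx, Ny]
  norm_num [Matrix.cons_mul, Matrix.vecMul_cons, Matrix.empty_mul,
    Matrix.cons_vecMul, Matrix.empty_vecMul, zero_vec6]

private lemma hcommm : Nmat * (Nx + Ny) = (Nx + Ny) * Nmat := by
  simp only [Nx, Ny, Nmat]
  norm_num [Matrix.cons_mul, Matrix.vecMul_cons, Matrix.empty_mul,
    Matrix.cons_vecMul, Matrix.empty_vecMul, zero_vec6]

private lemma hmx : Nmat * Nx =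
    !![0, 0, 0, 20, 15, 0;
       0, 0, 0, 0, 0, -13;
       0, 0, 0, 0, 0, -22;
       0, 0, 0, 0, 0, 0;
       0, 0, 0, 0, 0, 0;
       0, 0, 0, 0, 0, 0] := by
  simp only [Nx, Nmat]
  norm_num [Matrix.cons_mul, Matrix.vecMul_cons, Matrix.empty_mul,
    Matrix.cons_vecMul, Matrix.empty_vecMul, zero_vec6]

private lemma hxm : Nx * Nmat =
    !![0, 0, 0, 22, 13, 0;
       0, 0, 0, 0, 0, -15;
       0, 0, 0, 0, 0, -20;
       0, 0, 0, 0, 0, 0;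
       0, 0, 0, 0, 0, 0;
       0, 0, 0, 0, 0, 0] := by
  simp only [Nx, Nmat]
  norm_num [Matrix.cons_mul, Matrix.vecMul_cons, Matrix.empty_mul,
    Matrix.cons_vecMul, Matrix.empty_vecMul, zero_vec6]

/-- Appendix A.2: `N_x`, `N_y`, `N` are nilpotent elements of the symplectic Lie algebra
of `Q`; `N_x` and `N_y` commute; `N` commutes with `N_x + N_y` but not with `N_x`. -/
theorem stmt_10 :
    (IsNilpotent Nx ∧ IsNilpotent Ny ∧ IsNilpotent Nmat) ∧
    (∀ X ∈ [Nx, Ny, Nmat], Xᵀ * Qm + Qm * X = 0) ∧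
    Nx * Ny = Ny * Nx ∧
    Nmat * (Nx + Ny) = (Nx + Ny) * Nmat ∧
    Nmat * Nx ≠ Nx * Nmat := by
  refine ⟨⟨⟨4, pow4 _ _ hNx2 hNx4⟩, ⟨4, pow4 _ _ hNy2 hNy4⟩, ⟨4, pow4 _ _ hNm2 hNm4⟩⟩,
    ?_, hcommxy, hcommm, ?_⟩
  · intro X hX
    simp only [List.mem_cons, List.not_mem_nil, or_false] at hX
    rcases hX with rfl | rfl | rfl
    · exact hsympx
    · exact hsympy
    · exact hsympm
  · intro h
    rw [hmx, hxm] at h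
    have h2 := congrFun (congrFun h 0) 3
    norm_num [Matrix.cons_val_zero, Matrix.cons_val_one, Matrix.head_cons,
      Matrix.cons_val_three, Matrix.vecHead, Matrix.vecTail] at h2
    change (20:ℚ) = 22 at h2
    norm_num at h2
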